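/- (QAOA₁ conjugation series.) For every n-qubit matrix A and all real γ, β, with Q := exp(−(iβ)•B)·exp(−(iγ)•C), the doubly indexed family (ℓ,k) ↦ ((iβ)^k·(iγ)^ℓ/(ℓ!·k!)) • ∇_C^ℓ(∇^k A) over ℕ × ℕ is summable in the space of matrices, and its sum equals Qᴴ · A · Q. -/

import Mathlib

open Matrix Asymptotics

noncomputable section

abbrev Bits (n : ℕ) := Fin n → Bool

/-- `x` with bit `j` flipped. -/
def flipBit {n : ℕ} (j : Fin n) (x : Bits n) : Bits n := Function.update x j (!x j)

/-- The bit-flip operator `X_j`. -/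
def Xop {n : ℕ} (j : Fin n) : Matrix (Bits n) (Bits n) ℂ :=
  fun x y => if y = flipBit j x then 1 else 0

/-- The transverse-field mixing Hamiltonian `B = ∑ⱼ Xⱼ`. -/
def Bop (n : ℕ) : Matrix (Bits n) (Bits n) ℂ := ∑ j : Fin n, Xop j

/-- The cost Hamiltonian: diagonal matrix with entries `c x`. -/
def Cop {n : ℕ} (c : Bits n → ℝ) : Matrix (Bits n) (Bits n) ℂ :=
  Matrix.diagonal fun x => (c x : ℂ)

/-- The gradient superoperator `∇A = [B, A]`. -/
def gradB {n : ℕ} (A : Matrix (Bits n) (Bits n) ℂ) : Matrix (Bits n) (Bits n) ℂ :=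
  Bop n * A - A * Bop n

/-- The gradient with respect to the cost Hamiltonian `∇_C A = [C, A]`. -/
def gradC {n : ℕ} (c : Bits n → ℝ) (A : Matrix (Bits n) (Bits n) ℂ) :
    Matrix (Bits n) (Bits n) ℂ :=
  Cop c * A - A * Cop c

/-- The uniform superposition state `|s⟩`, every entry `(2^n)^{-1/2}`. -/
def sVec (n : ℕ) : Bits n → ℂ := fun _ => ((Real.sqrt (2 ^ n))⁻¹ : ℝ)

/-- Initial-state expectation value `⟨A⟩₀ = ⟨s|A|s⟩`. -/
def expect0 {n : ℕ} (A : Matrix (Bits n) (Bits n) ℂ) : ℂ :=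
  star (sVec n) ⬝ᵥ (A *ᵥ sVec n)

/-- Partial cost difference `∂ⱼc(x) = c(x⁽ʲ⁾) − c(x)`. -/
def pd {n : ℕ} (c : Bits n → ℝ) (j : Fin n) (x : Bits n) : ℝ := c (flipBit j x) - c x

/-- Cost divergence `dc(x) = ∑ⱼ ∂ⱼc(x)`. -/
def dcFun {n : ℕ} (c : Bits n → ℝ) (x : Bits n) : ℝ := ∑ j : Fin n, pd c j x

/-- The QAOA₁ operator `Q(γ,β) = exp(−iβB)·exp(−iγC)`. -/
def Qaoa1 {n : ℕ} (c : Bits n → ℝ) (γ β : ℝ) : Matrix (Bits n) (Bits n) ℂ :=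
  NormedSpace.exp ((-(Complex.I * (β : ℂ))) • Bop n) *
    NormedSpace.exp ((-(Complex.I * (γ : ℂ))) • Cop c)

/-- Probability of measuring the bitstring `x` in the QAOA₁ state. -/
def P1 {n : ℕ} (c : Bits n → ℝ) (x : Bits n) (γ β : ℝ) : ℝ :=
  ‖(Qaoa1 c γ β *ᵥ sVec n) x‖ ^ 2

/-- The QAOA₁ cost expectation value `⟨C⟩₁(γ,β)`. -/
def expC1 {n : ℕ} (c : Bits n → ℝ) (γ β : ℝ) : ℝ :=
  (star (Qaoa1 c γ β *ᵥ sVec n) ⬝ᵥ (Cop c *ᵥ (Qaoa1 c γ β *ᵥ sVec n))).re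

section AuxBanach

open NormedSpace ContinuousLinearMap

variable {𝔸 : Type*} [NormedRing 𝔸] [NormedAlgebra ℂ 𝔸] [CompleteSpace 𝔸]

/-- Left multiplication as a ring hom into continuous linear maps. -/
def lmulRH (𝔸 : Type*) [NormedRing 𝔸] [NormedAlgebra ℂ 𝔸] : 𝔸 →+* (𝔸 →L[ℂ] 𝔸) where
  toFun := ContinuousLinearMap.mul ℂ 𝔸
  map_one' := by ext x; simp
  map_mul' x y := by ext z; simp [ContinuousLinearMap.mul_apply, mul_assoc]
  map_zero' := by ext z; simp
  map_add' x y := by ext z; simp [add_mul]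

/-- Right multiplication as a ring hom from the opposite algebra. -/
def rmulRH (𝔸 : Type*) [NormedRing 𝔸] [NormedAlgebra ℂ 𝔸] : 𝔸ᵐᵒᵖ →+* (𝔸 →L[ℂ] 𝔸) where
  toFun x := (ContinuousLinearMap.mul ℂ 𝔸).flip x.unop
  map_one' := by ext z; simp
  map_mul' x y := by ext z; simp [ContinuousLinearMap.mul_apply, mul_assoc]
  map_zero' := by ext z; simp
  map_add' x y := by ext z; simp [mul_add]

/-- The adjoint action `ad X = [X, ·]` as a continuous linear map. -/
def adCLM (X : 𝔸) : 𝔸 →L[ℂ] 𝔸 :=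
  ContinuousLinearMap.mul ℂ 𝔸 X - (ContinuousLinearMap.mul ℂ 𝔸).flip X

@[simp] lemma adCLM_apply (X M : 𝔸) : adCLM X M = X * M - M * X := rfl

lemma adCLM_smul (t : ℂ) (X : 𝔸) : adCLM (t • X) = t • adCLM X := by
  ext M
  simp [adCLM, smul_sub, smul_mul_assoc, mul_smul_comm]

lemma exp_lmul (X : 𝔸) :
    exp (ContinuousLinearMap.mul ℂ 𝔸 X) = ContinuousLinearMap.mul ℂ 𝔸 (exp X) :=
  (map_exp_of_mem_ball (𝕂 := ℂ) (lmulRH 𝔸) (ContinuousLinearMap.mul ℂ 𝔸).continuous X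
    (by simp [expSeries_radius_eq_top ℂ 𝔸])).symm

lemma exp_rmul (X : 𝔸) :
    exp ((ContinuousLinearMap.mul ℂ 𝔸).flip X) =
      (ContinuousLinearMap.mul ℂ 𝔸).flip (exp X) := by
  have hc : Continuous (rmulRH 𝔸) :=
    (ContinuousLinearMap.mul ℂ 𝔸).flip.continuous.comp MulOpposite.continuous_unop
  have := map_exp_of_mem_ball (𝕂 := ℂ) (rmulRH 𝔸) hc (MulOpposite.op X)
    (by simp [expSeries_radius_eq_top ℂ 𝔸ᵐᵒᵖ])
  rw [exp_op] at this
  exact this.symm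

lemma exp_adCLM (X : 𝔸) :
    exp (adCLM X) =
      ContinuousLinearMap.mul ℂ 𝔸 (exp X) *
        (ContinuousLinearMap.mul ℂ 𝔸).flip (exp (-X)) := by
  have hcomm : Commute (ContinuousLinearMap.mul ℂ 𝔸 X)
      ((ContinuousLinearMap.mul ℂ 𝔸).flip (-X)) := by
    refine ContinuousLinearMap.ext fun M => ?_
    simp [ContinuousLinearMap.mul_apply, mul_assoc]
  have hX : adCLM X = ContinuousLinearMap.mul ℂ 𝔸 X +
      (ContinuousLinearMap.mul ℂ 𝔸).flip (-X) := by
    simp [adCLM, sub_eq_add_neg]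
  rw [hX, exp_add_of_commute_of_mem_ball (𝕂 := ℂ) hcomm
    (by simp [expSeries_radius_eq_top ℂ (𝔸 →L[ℂ] 𝔸)]) (by simp [expSeries_radius_eq_top ℂ (𝔸 →L[ℂ] 𝔸)]), exp_lmul, exp_rmul]

lemma pow_apply_norm_le (T : 𝔸 →L[ℂ] 𝔸) (M : 𝔸) (k : ℕ) :
    ‖(T ^ k) M‖ ≤ ‖T‖ ^ k * ‖M‖ := by
  induction k with
  | zero => simp
  | succ k ih =>
      rw [pow_succ', pow_succ']
      calc ‖(T * T ^ k) M‖ = ‖T ((T ^ k) M)‖ := by rw [ContinuousLinearMap.mul_apply]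
        _ ≤ ‖T‖ * ‖(T ^ k) M‖ := T.le_opNorm _
        _ ≤ ‖T‖ * (‖T‖ ^ k * ‖M‖) := by
            exact mul_le_mul_of_nonneg_left ih (norm_nonneg T)
        _ = ‖T‖ * ‖T‖ ^ k * ‖M‖ := by ring

lemma conj_exp_summable (X A : 𝔸) :
    Summable fun k : ℕ => ((k.factorial : ℂ))⁻¹ • (adCLM X ^ k) A := by
  have hs : Summable fun k : ℕ => ((k.factorial : ℂ))⁻¹ • adCLM X ^ k :=
    expSeries_summable' (𝕂 := ℂ) (adCLM X)
  have := hs.map (ContinuousLinearMap.apply ℂ 𝔸 A) (ContinuousLinearMap.apply ℂ 𝔸 A).continuous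
  simpa [Function.comp_def] using this

lemma conj_exp_tsum (X A : 𝔸) :
    ∑' k : ℕ, ((k.factorial : ℂ))⁻¹ • (adCLM X ^ k) A = exp X * A * exp (-X) := by
  have hs : Summable fun k : ℕ => ((k.factorial : ℂ))⁻¹ • adCLM X ^ k :=
    expSeries_summable' (𝕂 := ℂ) (adCLM X)
  have hmap := (ContinuousLinearMap.apply ℂ 𝔸 A).map_tsum hs
  have hexp : exp (adCLM X) = ∑' k : ℕ, ((k.factorial : ℂ))⁻¹ • adCLM X ^ k := by
    rw [exp_eq_tsum ℂ]
  rw [← hexp] at hmap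
  simp only [ContinuousLinearMap.apply_apply, ContinuousLinearMap.smul_apply] at hmap
  have : exp (adCLM X) A = exp X * A * exp (-X) := by
    rw [exp_adCLM]
    simp [ContinuousLinearMap.mul_apply, mul_assoc]
  rw [← this, hmap]

lemma adCLM_iterate (X M : 𝔸) (k : ℕ) :
    (fun M => X * M - M * X)^[k] M = (adCLM X ^ k) M := by
  induction k with
  | zero => simp
  | succ k ih =>
      rw [Function.iterate_succ_apply', ih, pow_succ', ContinuousLinearMap.mul_apply,
        adCLM_apply]

end AuxBanach

section MatrixAux

lemma flipBit_flipBit {n : ℕ} (j : Fin n) (x : Bits n) : flipBit j (flipBit j x) = x := by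
  simp [flipBit, Function.update_self, Function.update_idem, Bool.not_not,
    Function.update_eq_self]

lemma Xop_conjTranspose {n : ℕ} (j : Fin n) : (Xop j)ᴴ = Xop j := by
  ext x y
  have h : (x = flipBit j y) ↔ (y = flipBit j x) :=
    ⟨fun h => by rw [h, flipBit_flipBit], fun h => by rw [h, flipBit_flipBit]⟩
  simp [Matrix.conjTranspose_apply, Xop, h, apply_ite (star : ℂ → ℂ)]

lemma Bop_conjTranspose (n : ℕ) : (Bop n)ᴴ = Bop n := by
  simp [Bop, Matrix.conjTranspose_sum, Xop_conjTranspose]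

lemma Cop_conjTranspose {n : ℕ} (c : Bits n → ℝ) : (Cop c)ᴴ = Cop c := by
  simp [Cop, Matrix.diagonal_conjTranspose, Pi.star_def, Complex.star_def,
    Complex.conj_ofReal]

end MatrixAux


set_option maxHeartbeats 2000000 in
theorem stmt8 (n : ℕ) (hn : 1 ≤ n) (c : Bits n → ℝ) (A : Matrix (Bits n) (Bits n) ℂ)
    (γ β : ℝ) :
    Summable (fun q : ℕ × ℕ =>
      ((Complex.I * (β : ℂ)) ^ q.2 * (Complex.I * (γ : ℂ)) ^ q.1
          / ((q.1.factorial : ℂ) * (q.2.factorial : ℂ))) •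
        (gradC c)^[q.1] (gradB^[q.2] A)) ∧
    (∑' q : ℕ × ℕ,
      ((Complex.I * (β : ℂ)) ^ q.2 * (Complex.I * (γ : ℂ)) ^ q.1
          / ((q.1.factorial : ℂ) * (q.2.factorial : ℂ))) •
        (gradC c)^[q.1] (gradB^[q.2] A))
      = (Qaoa1 c γ β)ᴴ * A * Qaoa1 c γ β := by
  classical
  letI : SeminormedRing (Matrix (Bits n) (Bits n) ℂ) := Matrix.linftyOpSemiNormedRing
  letI : NormedRing (Matrix (Bits n) (Bits n) ℂ) := Matrix.linftyOpNormedRing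
  letI : NormedAlgebra ℂ (Matrix (Bits n) (Bits n) ℂ) := Matrix.linftyOpNormedAlgebra
  set B' : Matrix (Bits n) (Bits n) ℂ := (Complex.I * (β : ℂ)) • Bop n with hB'
  set C' : Matrix (Bits n) (Bits n) ℂ := (Complex.I * (γ : ℂ)) • Cop c with hC'
  -- Rewrite each term of the family
  have hgB : ∀ (k : ℕ) (M : Matrix (Bits n) (Bits n) ℂ),
      gradB^[k] M = (adCLM (Bop n) ^ k) M := by
    intro k M
    exact adCLM_iterate (Bop n) M k
  have hgC : ∀ (k : ℕ) (M : Matrix (Bits n) (Bits n) ℂ),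
      (gradC c)^[k] M = (adCLM (Cop c) ^ k) M := by
    intro k M
    exact adCLM_iterate (Cop c) M k
  have hF : ∀ q : ℕ × ℕ,
      ((Complex.I * (β : ℂ)) ^ q.2 * (Complex.I * (γ : ℂ)) ^ q.1
          / ((q.1.factorial : ℂ) * (q.2.factorial : ℂ))) •
        (gradC c)^[q.1] (gradB^[q.2] A)
      = ((q.1.factorial : ℂ))⁻¹ •
          (adCLM C' ^ q.1) (((q.2.factorial : ℂ))⁻¹ • (adCLM B' ^ q.2) A) := by
    rintro ⟨l, k⟩
    simp only [hgB, hgC]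
    rw [hB', hC', adCLM_smul, adCLM_smul, smul_pow, smul_pow,
      ContinuousLinearMap.smul_apply, ContinuousLinearMap.smul_apply,
      _root_.map_smul, _root_.map_smul]
    rw [smul_smul, smul_smul, smul_smul]
    congr 1
    have hl : ((l.factorial : ℂ)) ≠ 0 := Nat.cast_ne_zero.mpr l.factorial_ne_zero
    have hk : ((k.factorial : ℂ)) ≠ 0 := Nat.cast_ne_zero.mpr k.factorial_ne_zero
    field_simp
  -- Summability
  have hsum : Summable (fun q : ℕ × ℕ =>
      ((Complex.I * (β : ℂ)) ^ q.2 * (Complex.I * (γ : ℂ)) ^ q.1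
          / ((q.1.factorial : ℂ) * (q.2.factorial : ℂ))) •
        (gradC c)^[q.1] (gradB^[q.2] A)) := by
    refine Summable.of_norm_bounded
      (g := fun q : ℕ × ℕ => ‖adCLM C'‖ ^ q.1 / q.1.factorial *
        (‖adCLM B'‖ ^ q.2 / q.2.factorial * ‖A‖)) ?_ ?_
    · exact (Real.summable_pow_div_factorial _).mul_of_nonneg
        ((Real.summable_pow_div_factorial _).mul_right _)
        (fun l => by positivity) (fun k => by positivity)
    · intro q
      rw [hF q]
      have hinner : ‖((q.2.factorial : ℂ))⁻¹ • (adCLM B' ^ q.2) A‖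
          ≤ (q.2.factorial : ℝ)⁻¹ * (‖adCLM B'‖ ^ q.2 * ‖A‖) := by
        rw [norm_smul]
        have : ‖((q.2.factorial : ℂ))⁻¹‖ = ((q.2.factorial : ℝ))⁻¹ := by
          rw [norm_inv]; simp
        rw [this]
        exact mul_le_mul_of_nonneg_left (pow_apply_norm_le _ _ _) (by positivity)
      calc ‖((q.1.factorial : ℂ))⁻¹ •
            (adCLM C' ^ q.1) (((q.2.factorial : ℂ))⁻¹ • (adCLM B' ^ q.2) A)‖
          = (q.1.factorial : ℝ)⁻¹ *
            ‖(adCLM C' ^ q.1) (((q.2.factorial : ℂ))⁻¹ • (adCLM B' ^ q.2) A)‖ := by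
            rw [norm_smul, norm_inv]; simp
        _ ≤ (q.1.factorial : ℝ)⁻¹ * (‖adCLM C'‖ ^ q.1 *
              ((q.2.factorial : ℝ)⁻¹ * (‖adCLM B'‖ ^ q.2 * ‖A‖))) := by
            refine mul_le_mul_of_nonneg_left ?_ (by positivity)
            exact (pow_apply_norm_le _ _ _).trans
              (mul_le_mul_of_nonneg_left hinner (by positivity))
        _ = ‖adCLM C'‖ ^ q.1 / q.1.factorial *
              (‖adCLM B'‖ ^ q.2 / q.2.factorial * ‖A‖) := by
            rw [div_eq_mul_inv, div_eq_mul_inv]; ring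
  refine ⟨hsum, ?_⟩
  -- The double sum
  have hA1 := conj_exp_tsum B' A
  set A1 : Matrix (Bits n) (Bits n) ℂ :=
    NormedSpace.exp B' * A * NormedSpace.exp (-B') with hA1def
  have hinner : ∀ l : ℕ,
      (∑' k : ℕ, ((Complex.I * (β : ℂ)) ^ k * (Complex.I * (γ : ℂ)) ^ l
          / ((l.factorial : ℂ) * (k.factorial : ℂ))) •
        (gradC c)^[l] (gradB^[k] A))
      = ((l.factorial : ℂ))⁻¹ • (adCLM C' ^ l) A1 := by
    intro l
    have hsB := conj_exp_summable B' A
    have step1 : (∑' k : ℕ, ((Complex.I * (β : ℂ)) ^ k * (Complex.I * (γ : ℂ)) ^ l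
          / ((l.factorial : ℂ) * (k.factorial : ℂ))) •
        (gradC c)^[l] (gradB^[k] A))
        = ∑' k : ℕ, (((l.factorial : ℂ))⁻¹ • adCLM C' ^ l)
            (((k.factorial : ℂ))⁻¹ • (adCLM B' ^ k) A) := by
      refine tsum_congr fun k => ?_
      rw [hF (l, k)]
      simp only [ContinuousLinearMap.smul_apply, _root_.map_smul]
      rw [smul_comm]
    rw [step1]
    refine (ContinuousLinearMap.map_tsum _ hsB).symm.trans ?_
    rw [hA1]
    rfl
  -- Right hand side
  have hBH : (Bop n)ᴴ = Bop n := Bop_conjTranspose n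
  have hCH : (Cop c)ᴴ = Cop c := Cop_conjTranspose c
  have hQ : Qaoa1 c γ β = NormedSpace.exp (-B') * NormedSpace.exp (-C') := by
    rw [Qaoa1, hB', hC', neg_smul, neg_smul]
  have hstar : ∀ t : ℝ, -(star (Complex.I * (t : ℂ))) = Complex.I * (t : ℂ) := by
    intro t
    simp [Complex.star_def, Complex.conj_ofReal]
  have hQH : (Qaoa1 c γ β)ᴴ = NormedSpace.exp C' * NormedSpace.exp B' := by
    rw [hQ, Matrix.conjTranspose_mul, ← Matrix.exp_conjTranspose, ← Matrix.exp_conjTranspose]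
    congr 1
    · rw [hC', Matrix.conjTranspose_neg, Matrix.conjTranspose_smul, hCH, ← neg_smul, hstar]
    · rw [hB', Matrix.conjTranspose_neg, Matrix.conjTranspose_smul, hBH, ← neg_smul, hstar]
  calc (∑' q : ℕ × ℕ,
      ((Complex.I * (β : ℂ)) ^ q.2 * (Complex.I * (γ : ℂ)) ^ q.1
          / ((q.1.factorial : ℂ) * (q.2.factorial : ℂ))) •
        (gradC c)^[q.1] (gradB^[q.2] A))
      = ∑' l : ℕ, ∑' k : ℕ,
        ((Complex.I * (β : ℂ)) ^ k * (Complex.I * (γ : ℂ)) ^ l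
          / ((l.factorial : ℂ) * (k.factorial : ℂ))) •
        (gradC c)^[l] (gradB^[k] A) := hsum.tsum_prod
    _ = ∑' l : ℕ, ((l.factorial : ℂ))⁻¹ • (adCLM C' ^ l) A1 := tsum_congr hinner
    _ = NormedSpace.exp C' * A1 * NormedSpace.exp (-C') := conj_exp_tsum C' A1
    _ = (Qaoa1 c γ β)ᴴ * A * Qaoa1 c γ β := by
        rw [hQH, hQ, hA1def]
        simp only [mul_assoc]
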